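/- Consider the recursions A_t = A_{t−1}(I − α_t w_t w_tᵀ) + α_t (g_t − b_{t−1}) w_tᵀ and b_t = (1 − β_t) b_{t−1} + β_t (g_t − A_{t−1} w_t), where ‖w_t‖₂ ≤ D_w, ‖g_t‖₂ ≤ D_G, 0 < α_t with S_α := Σ_{s=1}^∞ α_s < 1/D_w², and 0 < β_t ≤ 1 for all t. Then there exist constants D_A and D_b, independent of t, such that ‖A_t‖ ≤ D_A (spectral norm) and ‖b_t‖₂ ≤ D_b for all t. Explicitly, one may take D_b = max{‖b₀‖₂, (D_G(1 + S_α D_w²) + ‖A₀‖ D_w)/(1 − S_α D_w²)} and D_A = ‖A₀‖ + S_α D_w (D_b + D_G). -/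

import Mathlib

/-- The outer product `u vᵀ` as a continuous linear map: `x ↦ ⟪v, x⟫ • u`. -/
noncomputable def outer {d : ℕ} (u v : EuclideanSpace ℝ (Fin d)) :
    EuclideanSpace ℝ (Fin d) →L[ℝ] EuclideanSpace ℝ (Fin d) :=
  (innerSL ℝ v).smulRight u

lemma norm_outer {d : ℕ} (u v : EuclideanSpace ℝ (Fin d)) :
    ‖outer u v‖ = ‖v‖ * ‖u‖ := by
  rw [outer, ContinuousLinearMap.norm_smulRight_apply, innerSL_apply_norm]

lemma contraction_norm_le {d : ℕ} (w : EuclideanSpace ℝ (Fin d)) (a : ℝ)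
    (ha : 0 ≤ a) (haw : a * ‖w‖ ^ 2 ≤ 1) :
    ‖ContinuousLinearMap.id ℝ (EuclideanSpace ℝ (Fin d)) - a • outer w w‖ ≤ 1 := by
  refine ContinuousLinearMap.opNorm_le_bound _ zero_le_one fun x => ?_
  rw [one_mul]
  have hox : (ContinuousLinearMap.id ℝ (EuclideanSpace ℝ (Fin d)) - a • outer w w) x
      = x - (a * (inner ℝ w x : ℝ)) • w := by
    simp only [ContinuousLinearMap.sub_apply, ContinuousLinearMap.id_apply,
      ContinuousLinearMap.smul_apply]
    rw [show outer w w x = (inner ℝ w x : ℝ) • w from rfl, smul_smul]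
  rw [hox]
  set c : ℝ := (inner ℝ w x : ℝ) with hc
  have hsq : ‖x - (a * c) • w‖ ^ 2 ≤ ‖x‖ ^ 2 := by
    rw [norm_sub_sq_real, real_inner_smul_right, norm_smul]
    have hxw : (inner ℝ x w : ℝ) = c := by rw [hc, real_inner_comm]
    rw [hxw, mul_pow, Real.norm_eq_abs, sq_abs]
    nlinarith [mul_le_mul_of_nonneg_right haw (mul_nonneg ha (sq_nonneg c)),
      mul_nonneg ha (sq_nonneg c)]
  exact (pow_le_pow_iff_left₀ (norm_nonneg _) (norm_nonneg _) two_ne_zero).mp hsq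

theorem stmt_5 {d : ℕ} (α β : ℕ → ℝ) (Dw DG : ℝ) (hDw : 0 < Dw)
    (w g b : ℕ → EuclideanSpace ℝ (Fin d))
    (A : ℕ → (EuclideanSpace ℝ (Fin d) →L[ℝ] EuclideanSpace ℝ (Fin d)))
    (hw : ∀ t, ‖w t‖ ≤ Dw) (hg : ∀ t, ‖g t‖ ≤ DG)
    (hα : ∀ t, 0 < α (t + 1)) (hβ : ∀ t, 0 < β (t + 1) ∧ β (t + 1) ≤ 1)
    (hsum : Summable (fun s : ℕ => α (s + 1)))
    (hSα : (∑' s : ℕ, α (s + 1)) < 1 / Dw ^ 2)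
    (hA : ∀ t, A (t + 1) =
      (A t).comp (ContinuousLinearMap.id ℝ _ - α (t + 1) • outer (w (t + 1)) (w (t + 1)))
        + α (t + 1) • outer (g (t + 1) - b t) (w (t + 1)))
    (hb : ∀ t, b (t + 1) =
      (1 - β (t + 1)) • b t + β (t + 1) • (g (t + 1) - A t (w (t + 1)))) :
    ∃ DA Db : ℝ,
      Db = max ‖b 0‖
        ((DG * (1 + (∑' s : ℕ, α (s + 1)) * Dw ^ 2) + ‖A 0‖ * Dw)
          / (1 - (∑' s : ℕ, α (s + 1)) * Dw ^ 2)) ∧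
      DA = ‖A 0‖ + (∑' s : ℕ, α (s + 1)) * Dw * (Db + DG) ∧
      ∀ t, ‖A t‖ ≤ DA ∧ ‖b t‖ ≤ Db := by
  set S : ℝ := ∑' s : ℕ, α (s + 1) with hS
  set Db : ℝ := max ‖b 0‖ ((DG * (1 + S * Dw ^ 2) + ‖A 0‖ * Dw) / (1 - S * Dw ^ 2)) with hDb
  set DA : ℝ := ‖A 0‖ + S * Dw * (Db + DG) with hDA
  have hSnn : 0 ≤ S := tsum_nonneg fun s => (hα s).le
  have hc1 : S * Dw ^ 2 < 1 := by
    rw [lt_div_iff₀ (by positivity)] at hSα; linarith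
  have hDG : 0 ≤ DG := le_trans (norm_nonneg _) (hg 0)
  have hDbnn : 0 ≤ Db := le_trans (norm_nonneg _) (le_max_left _ _)
  have hDAnn : 0 ≤ DA := by
    rw [hDA]
    have : 0 ≤ S * Dw * (Db + DG) := by positivity
    have := norm_nonneg (A 0); linarith
  have hterm_le : ∀ t, α (t + 1) ≤ S := fun t =>
    Summable.le_tsum hsum t fun i _ => (hα i).le
  have hpart_le : ∀ t, (∑ s ∈ Finset.range t, α (s + 1)) ≤ S := fun t =>
    Summable.sum_le_tsum _ (fun i _ => (hα i).le) hsum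
  have hmono : ∀ t, (∑ s ∈ Finset.range t, α (s + 1)) * Dw * (Db + DG)
      ≤ S * Dw * (Db + DG) := fun t =>
    mul_le_mul_of_nonneg_right (mul_le_mul_of_nonneg_right (hpart_le t) hDw.le)
      (by linarith)
  -- key inequality: DG + DA * Dw ≤ Db
  have hkey : DG + DA * Dw ≤ Db := by
    have hDb2 : (DG * (1 + S * Dw ^ 2) + ‖A 0‖ * Dw) / (1 - S * Dw ^ 2) ≤ Db :=
      le_max_right _ _
    rw [div_le_iff₀ (by linarith)] at hDb2
    rw [hDA]
    nlinarith
  have main : ∀ t, ‖b t‖ ≤ Db ∧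
      ‖A t‖ ≤ ‖A 0‖ + (∑ s ∈ Finset.range t, α (s + 1)) * Dw * (Db + DG) := by
    intro t
    induction t with
    | zero =>
      refine ⟨le_max_left _ _, ?_⟩
      rw [Finset.sum_range_zero]
      have := norm_nonneg (A 0); linarith
    | succ t ih =>
      obtain ⟨ihb, ihA⟩ := ih
      have hAt : ‖A t‖ ≤ DA := by
        refine ihA.trans ?_
        rw [hDA]
        have := hmono t
        linarith
      constructor
      · -- bound on b (t+1)
        rw [hb t]
        obtain ⟨hβ0, hβ1⟩ := hβ t
        have h1 : ‖g (t + 1) - A t (w (t + 1))‖ ≤ DG + DA * Dw := by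
          refine (norm_sub_le _ _).trans (add_le_add (hg _) ?_)
          refine ((A t).le_opNorm _).trans ?_
          exact mul_le_mul hAt (hw _) (norm_nonneg _) hDAnn
        calc ‖(1 - β (t + 1)) • b t + β (t + 1) • (g (t + 1) - A t (w (t + 1)))‖
            ≤ ‖(1 - β (t + 1)) • b t‖ + ‖β (t + 1) • (g (t + 1) - A t (w (t + 1)))‖ :=
              norm_add_le _ _
          _ ≤ (1 - β (t + 1)) * Db + β (t + 1) * Db := by
              rw [norm_smul, norm_smul, Real.norm_eq_abs, Real.norm_eq_abs,
                abs_of_nonneg (by linarith), abs_of_nonneg hβ0.le]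
              refine add_le_add (mul_le_mul_of_nonneg_left ihb (by linarith))
                (mul_le_mul_of_nonneg_left (h1.trans hkey) hβ0.le)
          _ = Db := by ring
      · -- bound on A (t+1)
        rw [hA t]
        have hcontr : ‖ContinuousLinearMap.id ℝ (EuclideanSpace ℝ (Fin d))
            - α (t + 1) • outer (w (t + 1)) (w (t + 1))‖ ≤ 1 := by
          refine contraction_norm_le _ _ (hα t).le ?_
          have hw2 : ‖w (t + 1)‖ ^ 2 ≤ Dw ^ 2 :=
            pow_le_pow_left₀ (norm_nonneg _) (hw _) 2
          have h3 : α (t + 1) * ‖w (t + 1)‖ ^ 2 ≤ S * Dw ^ 2 :=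
            mul_le_mul (hterm_le t) hw2 (by positivity) hSnn
          linarith
        have hout : ‖outer (g (t + 1) - b t) (w (t + 1))‖ ≤ Dw * (Db + DG) := by
          rw [norm_outer]
          have h2 : ‖g (t + 1) - b t‖ ≤ Db + DG := by
            refine (norm_sub_le _ _).trans ?_
            have := hg (t + 1); linarith
          exact mul_le_mul (hw _) h2 (norm_nonneg _) hDw.le
        calc ‖(A t).comp (ContinuousLinearMap.id ℝ _
              - α (t + 1) • outer (w (t + 1)) (w (t + 1)))
              + α (t + 1) • outer (g (t + 1) - b t) (w (t + 1))‖
            ≤ ‖(A t).comp (ContinuousLinearMap.id ℝ _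
              - α (t + 1) • outer (w (t + 1)) (w (t + 1)))‖
              + ‖α (t + 1) • outer (g (t + 1) - b t) (w (t + 1))‖ := norm_add_le _ _
          _ ≤ ‖A t‖ * 1 + α (t + 1) * (Dw * (Db + DG)) := by
              refine add_le_add (((A t).opNorm_comp_le _).trans
                (mul_le_mul_of_nonneg_left hcontr (norm_nonneg _))) ?_
              refine (norm_smul_le (α (t + 1)) (outer (g (t + 1) - b t) (w (t + 1)))).trans ?_
              rw [Real.norm_eq_abs, abs_of_nonneg (hα t).le]
              exact mul_le_mul_of_nonneg_left hout (hα t).le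
          _ ≤ ‖A 0‖ + (∑ s ∈ Finset.range (t + 1), α (s + 1)) * Dw * (Db + DG) := by
              rw [Finset.sum_range_succ, mul_one]
              have : (∑ s ∈ Finset.range t, α (s + 1) + α (t + 1)) * Dw * (Db + DG)
                  = (∑ s ∈ Finset.range t, α (s + 1)) * Dw * (Db + DG)
                    + α (t + 1) * (Dw * (Db + DG)) := by ring
              rw [this]
              linarith
  refine ⟨DA, Db, rfl, rfl, fun t => ⟨?_, (main t).1⟩⟩
  refine (main t).2.trans ?_
  rw [hDA]
  have := hmono t
  linarith
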